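/- arXiv:2007.07990 — 5 statements merged into one kernel-verified Lean document; each statement's English description precedes it below -/
import Mathlib

section
/- For each positive integer k there exists a unique lambda_k > 0 such that, for X ~ Poisson(lambda_k), (1/k) * E[min(X,k)] = P[X <= k-1]. -/
/-- The probability mass function of a Poisson random variable with rate `l`. -/
noncomputable def poissonPMF (l : ℝ) (j : ℕ) : ℝ := Real.exp (-l) * l ^ j / (Nat.factorial j)

/-- `mu_k(X) = E[min(X,k)]/k` for `X ~ Poisson(l)`. -/
noncomputable def muPoisson (k : ℕ) (l : ℝ) : ℝ :=
  (1 / k) * ∑' j : ℕ, (↑(min j k) : ℝ) * poissonPMF l j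

/-- `delta_k(X) = P[X ≤ k-1]` for `X ~ Poisson(l)`. -/
noncomputable def deltaPoisson (k : ℕ) (l : ℝ) : ℝ := ∑ j ∈ Finset.range k, poissonPMF l j

/- ### Auxiliary development -/

noncomputable def qpoly (n : ℕ) (x : ℝ) : ℝ := ∑ j ∈ Finset.range n, x ^ j / (Nat.factorial j)

lemma hasDerivAt_qpoly_succ (m : ℕ) (x : ℝ) : HasDerivAt (qpoly (m+1)) (qpoly m x) x := by
  have h : ∀ j ∈ Finset.range (m+1), HasDerivAt (fun x : ℝ => x ^ j / (Nat.factorial j))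
      ((j : ℝ) * x ^ (j-1) / (Nat.factorial j)) x :=
    fun j _ => (hasDerivAt_pow j x).div_const _
  have hs := HasDerivAt.fun_sum h
  refine HasDerivAt.congr_deriv (f := qpoly (m+1)) hs ?_
  symm
  rw [Finset.sum_range_succ']
  simp only [Nat.cast_zero, zero_mul, Nat.factorial_zero, Nat.cast_one, zero_div, add_zero]
  unfold qpoly
  apply Finset.sum_congr rfl
  intro j _
  rw [Nat.factorial_succ]
  push_cast
  have hf : (0:ℝ) < (Nat.factorial j : ℝ) := by exact_mod_cast j.factorial_pos
  field_simp

lemma hasDerivAt_qpoly (m : ℕ) (x : ℝ) : HasDerivAt (qpoly m) (qpoly (m-1) x) x := by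
  cases m with
  | zero =>
      have : qpoly 0 = fun _ : ℝ => (0:ℝ) := by funext x; simp [qpoly]
      rw [this]
      simpa [qpoly] using hasDerivAt_const x (0:ℝ)
  | succ n => simpa using hasDerivAt_qpoly_succ n x

lemma qpoly_nonneg (n : ℕ) {x : ℝ} (hx : 0 ≤ x) : 0 ≤ qpoly n x :=
  Finset.sum_nonneg fun j _ => by positivity

lemma qpoly_zero_eval (m : ℕ) : qpoly (m+1) 0 = 1 := by
  unfold qpoly
  rw [Finset.sum_range_succ']
  simp

lemma qpoly_succ_sub (n : ℕ) (x : ℝ) :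
    qpoly (n+1) x = qpoly n x + x ^ n / (Nat.factorial n) := by
  unfold qpoly; rw [Finset.sum_range_succ]

/-- The key auxiliary function: `G m l = 2 δ_{m+1}(l) - l/(m+1) δ_m(l)` written via `qpoly`. -/
noncomputable def Gfun (m : ℕ) (l : ℝ) : ℝ :=
  Real.exp (-l) * (2 * qpoly (m+1) l - l / ((m:ℝ)+1) * qpoly m l)

lemma delta_eq_qpoly (n : ℕ) (l : ℝ) : deltaPoisson n l = Real.exp (-l) * qpoly n l := by
  unfold deltaPoisson qpoly poissonPMF
  rw [Finset.mul_sum]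
  exact Finset.sum_congr rfl fun j _ => by ring

lemma G_eq (m : ℕ) (l : ℝ) :
    Gfun m l = 2 * deltaPoisson (m+1) l - l / ((m:ℝ)+1) * deltaPoisson m l := by
  rw [delta_eq_qpoly, delta_eq_qpoly, Gfun]; ring

lemma hasDerivAt_G (m : ℕ) (l : ℝ) :
    HasDerivAt (Gfun m)
      (Real.exp (-l) *
        (2 * qpoly m l - (1/((m:ℝ)+1) * qpoly m l + l/((m:ℝ)+1) * qpoly (m-1) l)
          - (2 * qpoly (m+1) l - l / ((m:ℝ)+1) * qpoly m l))) l := by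
  have he : HasDerivAt (fun x : ℝ => Real.exp (-x)) (-Real.exp (-l)) l := by
    simpa [Function.comp_def] using (Real.hasDerivAt_exp (-l)).comp l (hasDerivAt_neg l)
  have hR : HasDerivAt (fun x : ℝ => 2 * qpoly (m+1) x - x / ((m:ℝ)+1) * qpoly m x)
      (2 * qpoly m l - (1/((m:ℝ)+1) * qpoly m l + l/((m:ℝ)+1) * qpoly (m-1) l)) l := by
    have h1 := (hasDerivAt_qpoly_succ m l).const_mul (2:ℝ)
    have h2 : HasDerivAt (fun x : ℝ => x / ((m:ℝ)+1)) (1/((m:ℝ)+1)) l := by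
      simpa using (hasDerivAt_id l).div_const ((m:ℝ)+1)
    have h3 := h2.fun_mul (hasDerivAt_qpoly m l)
    simpa using h1.fun_sub h3
  have := he.mul hR
  refine HasDerivAt.congr_deriv (f := Gfun m) this ?_
  ring

lemma deriv_G_neg (m : ℕ) {l : ℝ} (hl : 0 < l) :
    Real.exp (-l) *
        (2 * qpoly m l - (1/((m:ℝ)+1) * qpoly m l + l/((m:ℝ)+1) * qpoly (m-1) l)
          - (2 * qpoly (m+1) l - l / ((m:ℝ)+1) * qpoly m l)) < 0 := by
  have hM : (0:ℝ) ≤ (m:ℝ) := Nat.cast_nonneg m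
  have hM1 : (0:ℝ) < (m:ℝ)+1 := by linarith
  set A : ℝ := l ^ m / (Nat.factorial m) with hA_def
  have hA : 0 < A := by
    have : (0:ℝ) < (Nat.factorial m : ℝ) := by exact_mod_cast m.factorial_pos
    positivity
  set B : ℝ := qpoly m l with hB_def
  set C : ℝ := qpoly (m-1) l with hC_def
  have hB : 0 ≤ B := qpoly_nonneg m hl.le
  have hb : l * B - l * C = (m:ℝ) * A := by
    cases m with
    | zero => simp [hB_def, hC_def, qpoly]
    | succ n =>
        have h1 : B = C + l ^ n / (Nat.factorial n) := by
          rw [hB_def, hC_def]; simpa using qpoly_succ_sub n l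
        have hf : (0:ℝ) < (Nat.factorial n : ℝ) := by exact_mod_cast n.factorial_pos
        rw [h1, hA_def]
        rw [Nat.factorial_succ]
        push_cast
        field_simp
        ring
  have hsucc : qpoly (m+1) l = B + A := by rw [hB_def, hA_def]; exact qpoly_succ_sub m l
  rw [hsucc]
  set D : ℝ := 2 * B - (1/((m:ℝ)+1) * B + l/((m:ℝ)+1) * C) - (2 * (B + A) - l / ((m:ℝ)+1) * B)
    with hD_def
  have key : D * ((m:ℝ)+1) = -B - ((m:ℝ)+2) * A := by
    rw [hD_def]
    field_simp
    linear_combination hb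
  have hD : D < 0 := by
    have h1 : D * ((m:ℝ)+1) < 0 := by rw [key]; nlinarith
    by_contra h
    push_neg at h
    nlinarith
  have he : 0 < Real.exp (-l) := Real.exp_pos _
  exact mul_neg_of_pos_of_neg he hD

lemma G_cont (m : ℕ) : Continuous (Gfun m) :=
  continuous_iff_continuousAt.2 fun x => (hasDerivAt_G m x).differentiableAt.continuousAt

lemma G_strictAntiOn (m : ℕ) : StrictAntiOn (Gfun m) (Set.Ici 0) := by
  apply strictAntiOn_of_deriv_neg (convex_Ici 0) (G_cont m).continuousOn
  intro x hx
  rw [interior_Ici] at hx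
  rw [(hasDerivAt_G m x).deriv]
  exact deriv_G_neg m hx

lemma G_zero (m : ℕ) : Gfun m 0 = 2 := by
  simp [Gfun, qpoly_zero_eval]

lemma poisson_summable (l : ℝ) : Summable (fun j => poissonPMF l j) := by
  have := (Real.summable_pow_div_factorial l).mul_left (Real.exp (-l))
  simpa [poissonPMF, mul_div_assoc] using this

lemma poisson_tsum (l : ℝ) : ∑' j : ℕ, poissonPMF l j = 1 := by
  have h1 : ∑' j : ℕ, poissonPMF l j
      = Real.exp (-l) * ∑' j : ℕ, l ^ j / (Nat.factorial j) := by
    rw [← tsum_mul_left]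
    exact tsum_congr fun j => by simp [poissonPMF, mul_div_assoc]
  have h2 : (∑' j : ℕ, l ^ j / (Nat.factorial j : ℝ)) = Real.exp l := by
    rw [Real.exp_eq_exp_ℝ, NormedSpace.exp_eq_tsum_div]
  rw [h1, h2, ← Real.exp_add, neg_add_cancel, Real.exp_zero]

lemma poisson_nonneg {l : ℝ} (hl : 0 ≤ l) (j : ℕ) : 0 ≤ poissonPMF l j := by
  unfold poissonPMF
  positivity

lemma mu_eq (m : ℕ) {l : ℝ} (hl : 0 ≤ l) :
    muPoisson (m+1) l = l / ((m:ℝ)+1) * deltaPoisson m l + (1 - deltaPoisson (m+1) l) := by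
  set k := m + 1 with hk_def
  have hps := poisson_summable l
  have hf : Summable (fun j => ((min j k : ℕ) : ℝ) * poissonPMF l j) := by
    apply Summable.of_nonneg_of_le
      (fun j => mul_nonneg (by positivity) (poisson_nonneg hl j))
      (fun j => ?_) (hps.mul_left (k:ℝ))
    exact mul_le_mul_of_nonneg_right (by exact_mod_cast Nat.cast_le.2 (min_le_right j k))
      (poisson_nonneg hl j)
  have hsplit := Summable.sum_add_tsum_nat_add (f := fun j => ((min j k : ℕ) : ℝ) * poissonPMF l j) k hf
  have hsplit2 := Summable.sum_add_tsum_nat_add (f := poissonPMF l) k hps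
  have htail : (∑' i : ℕ, ((min (i+k) k : ℕ) : ℝ) * poissonPMF l (i+k))
      = (k:ℝ) * (1 - deltaPoisson k l) := by
    have h1 : (∑' i : ℕ, ((min (i+k) k : ℕ) : ℝ) * poissonPMF l (i+k))
        = (k:ℝ) * ∑' i : ℕ, poissonPMF l (i+k) := by
      rw [← tsum_mul_left]
      exact tsum_congr fun i => by rw [min_eq_right (Nat.le_add_left k i)]
    have h2 : (∑' i : ℕ, poissonPMF l (i+k)) = 1 - deltaPoisson k l := by
      have := hsplit2
      rw [poisson_tsum] at this
      unfold deltaPoisson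
      linarith
    rw [h1, h2]
  have hhead : (∑ j ∈ Finset.range k, ((min j k : ℕ) : ℝ) * poissonPMF l j)
      = l * deltaPoisson m l := by
    have h1 : (∑ j ∈ Finset.range k, ((min j k : ℕ) : ℝ) * poissonPMF l j)
        = ∑ j ∈ Finset.range k, (j : ℝ) * poissonPMF l j :=
      Finset.sum_congr rfl fun j hj => by
        rw [min_eq_left (le_of_lt (Finset.mem_range.1 hj))]
    rw [h1, hk_def, Finset.sum_range_succ']
    simp only [Nat.cast_zero, zero_mul, add_zero]
    unfold deltaPoisson
    rw [Finset.mul_sum]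
    apply Finset.sum_congr rfl
    intro j _
    unfold poissonPMF
    rw [Nat.factorial_succ, pow_succ]
    have hf : (0:ℝ) < (Nat.factorial j : ℝ) := by exact_mod_cast j.factorial_pos
    push_cast
    field_simp
  have hmu : muPoisson k l = (1/(k:ℝ)) * (l * deltaPoisson m l + (k:ℝ) * (1 - deltaPoisson k l)) := by
    unfold muPoisson
    rw [← hsplit, htail, hhead]
  rw [hmu]
  have hk0 : ((k:ℕ):ℝ) = (m:ℝ)+1 := by push_cast [hk_def]; ring
  rw [hk0]
  have : (0:ℝ) < (m:ℝ)+1 := by positivity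
  field_simp

lemma eq_iff_G (m : ℕ) {l : ℝ} (hl : 0 ≤ l) :
    (muPoisson (m+1) l = deltaPoisson (m+1) l) ↔ Gfun m l = 1 := by
  rw [mu_eq m hl, G_eq]
  constructor <;> intro h <;> linarith

/-- For each positive integer `k` there exists a unique `λ_k > 0` such that for
`X ~ Poisson(λ_k)` we have `(1/k) E[min(X,k)] = P[X ≤ k-1]`. -/
theorem stmt_4 (k : ℕ) (hk : 0 < k) :
    ∃! l : ℝ, 0 < l ∧ muPoisson k l = deltaPoisson k l := by
  obtain ⟨m, rfl⟩ : ∃ m, k = m + 1 := ⟨k - 1, (Nat.succ_pred_eq_of_pos hk).symm⟩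
  -- find b with Gfun m b < 1
  have htend : Filter.Tendsto (fun l => 2 * (Real.exp (-l) * qpoly (m+1) l))
      Filter.atTop (nhds 0) := by
    have heq : (fun l : ℝ => Real.exp (-l) * qpoly (m+1) l)
        = fun l => ∑ j ∈ Finset.range (m+1), (l ^ j * Real.exp (-l)) / (Nat.factorial j) := by
      funext l
      rw [qpoly, Finset.mul_sum]
      exact Finset.sum_congr rfl fun j _ => by ring
    have h1 : Filter.Tendsto (fun l : ℝ => Real.exp (-l) * qpoly (m+1) l)
        Filter.atTop (nhds 0) := by
      rw [heq]
      have : Filter.Tendsto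
          (fun l : ℝ => ∑ j ∈ Finset.range (m+1), (l ^ j * Real.exp (-l)) / (Nat.factorial j))
          Filter.atTop (nhds (∑ j ∈ Finset.range (m+1), (0:ℝ))) := by
        apply tendsto_finset_sum
        intro j _
        simpa using (Real.tendsto_pow_mul_exp_neg_atTop_nhds_zero j).div_const (Nat.factorial j : ℝ)
      simpa using this
    simpa using h1.const_mul (2:ℝ)
  obtain ⟨b, hb1, hb0⟩ :=
    ((htend.eventually (gt_mem_nhds (by norm_num : (0:ℝ) < 1))).and
      (Filter.eventually_ge_atTop (0:ℝ))).exists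
  have hGb : Gfun m b < 1 := by
    have hq : 0 ≤ b / ((m:ℝ)+1) * qpoly m b := by
      have := qpoly_nonneg m hb0
      have hm1 : (0:ℝ) < (m:ℝ)+1 := by positivity
      positivity
    have he : 0 < Real.exp (-b) := Real.exp_pos _
    have : Gfun m b ≤ 2 * (Real.exp (-b) * qpoly (m+1) b) := by
      unfold Gfun
      nlinarith
    linarith
  -- IVT
  have hivt : (1:ℝ) ∈ Gfun m '' Set.Icc 0 b := by
    apply intermediate_value_Icc' hb0 (G_cont m).continuousOn
    constructor
    · exact hGb.le
    · rw [G_zero]; norm_num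
  obtain ⟨c, hc, hGc⟩ := hivt
  have hc0 : 0 < c := by
    rcases lt_or_eq_of_le hc.1 with h | h
    · exact h
    · exfalso; rw [← h, G_zero] at hGc; norm_num at hGc
  refine ⟨c, ⟨hc0, (eq_iff_G m hc0.le).2 hGc⟩, ?_⟩
  rintro y ⟨hy0, hyeq⟩
  have hGy : Gfun m y = 1 := (eq_iff_G m hy0.le).1 hyeq
  exact (G_strictAntiOn m).injOn (Set.mem_Ici.2 hy0.le) (Set.mem_Ici.2 hc0.le)
    (hGy.trans hGc.symm)
end

section
/- Let n_r >= k' >= 3 and r in (0,1). Define Q_i = C(n_r - 1, k' - i) (1-r)^{k'-i} r^{n_r - k' + i - 1} for i = 1, 2, and Q_{>=3} = sum_{i>=3} C(n_r - 1, k' - i) (1-r)^{k'-i} r^{n_r - k' + i - 1}. Then Q_2^2 - Q_{>=3} (Q_1 - Q_2) > 0. -/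
lemma choose_ratio_aux (N a b : ℕ) (hab : a ≤ b) :
    N.choose a * N.choose (b+1) ≤ N.choose (a+1) * N.choose b := by
  have hpos : 0 < (a+1)*(b+1) := by positivity
  apply Nat.le_of_mul_le_mul_right _ hpos
  have h1 := Nat.choose_succ_right_eq N a
  have h2 := Nat.choose_succ_right_eq N b
  have h3 : (N-b)*(a+1) ≤ (N-a)*(b+1) :=
    Nat.mul_le_mul (Nat.sub_le_sub_left hab N) (by omega)
  calc N.choose a * N.choose (b+1) * ((a+1)*(b+1))
      = N.choose a * (N.choose (b+1) * (b+1)) * (a+1) := by ring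
    _ = N.choose a * (N.choose b * (N-b)) * (a+1) := by rw [h2]
    _ = (N.choose a * N.choose b) * ((N-b)*(a+1)) := by ring
    _ ≤ (N.choose a * N.choose b) * ((N-a)*(b+1)) := Nat.mul_le_mul_left _ h3
    _ = (N.choose a * (N-a)) * (N.choose b * (b+1)) := by ring
    _ = (N.choose (a+1) * (a+1)) * (N.choose b * (b+1)) := by rw [← h1]
    _ = N.choose (a+1) * N.choose b * ((a+1)*(b+1)) := by ring

lemma key_step (nr k' : ℕ) (hk : 3 ≤ k') (hn : k' ≤ nr)
    (r : ℝ) (hr0 : 0 < r) (hr1 : r < 1) (i : ℕ) (h1 : 1 ≤ i) (h2 : i + 1 ≤ k') :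
    ((nr-1).choose (k'-(i+1)) : ℝ) * (1-r)^(k'-(i+1)) * r^(nr-k'+(i+1)-1) *
      (((nr-1).choose (k'-1) : ℝ) * (1-r)^(k'-1) * r^(nr-k'+1-1)) ≤
    ((nr-1).choose (k'-i) : ℝ) * (1-r)^(k'-i) * r^(nr-k'+i-1) *
      (((nr-1).choose (k'-2) : ℝ) * (1-r)^(k'-2) * r^(nr-k'+2-1)) := by
  obtain ⟨j, a, m, rfl, rfl, rfl⟩ : ∃ j a m, i = j+1 ∧ k' = j+a+2 ∧ nr = j+a+m+2 :=
    ⟨i-1, k'-i-1, nr-k', by omega, by omega, by omega⟩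
  have E1 : j+a+2 - (j+1+1) = a := by omega
  have E2 : j+a+m+2 - (j+a+2) + (j+1+1) - 1 = m+j+1 := by omega
  have E3 : j+a+2 - 1 = j+a+1 := by omega
  have E4 : j+a+m+2 - (j+a+2) + 1 - 1 = m := by omega
  have E5 : j+a+2 - (j+1) = a+1 := by omega
  have E6 : j+a+m+2 - (j+a+2) + (j+1) - 1 = m+j := by omega
  have E7 : j+a+2 - 2 = j+a := by omega
  have E8 : j+a+m+2 - (j+a+2) + 2 - 1 = m+1 := by omega
  have E9 : j+a+m+2 - 1 = j+a+m+1 := by omega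
  rw [E1, E2, E3, E4, E5, E6, E7, E8, E9]
  set N := j+a+m+1 with hN
  have hc : (↑(N.choose a * N.choose (j+a+1)) : ℝ) ≤ ↑(N.choose (a+1) * N.choose (j+a)) := by
    exact_mod_cast choose_ratio_aux N a (j+a) (Nat.le_add_left a j)
  have h1r : (0:ℝ) < 1 - r := by linarith
  calc (N.choose a : ℝ) * (1-r)^a * r^(m+j+1) * ((N.choose (j+a+1) : ℝ) * (1-r)^(j+a+1) * r^m)
      = (↑(N.choose a * N.choose (j+a+1)) : ℝ) * ((1-r)^(a+(j+a+1)) * r^((m+j+1)+m)) := by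
        push_cast; ring
    _ ≤ (↑(N.choose (a+1) * N.choose (j+a)) : ℝ) * ((1-r)^(a+(j+a+1)) * r^((m+j+1)+m)) := by
        apply mul_le_mul_of_nonneg_right hc; positivity
    _ = (N.choose (a+1) : ℝ) * (1-r)^(a+1) * r^(m+j) * ((N.choose (j+a) : ℝ) * (1-r)^(j+a) * r^(m+1)) := by
        push_cast
        have : a+(j+a+1) = (a+1)+(j+a) := by omega
        rw [this]
        have : (m+j+1)+m = (m+j)+(m+1) := by omega
        rw [this]
        ring

/-- Let `n_r ≥ k' ≥ 3` and `r ∈ (0,1)`. With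
`Q i = C(n_r - 1, k' - i) (1-r)^(k'-i) r^(n_r - k' + i - 1)` for `1 ≤ i ≤ k'`
(and `Q i = 0` for `i > k'`), letting `Q₃ = ∑_{i ≥ 3} Q i`, we have
`Q 2 ^ 2 - Q₃ (Q 1 - Q 2) > 0`. -/
theorem stmt_11 (nr k' : ℕ) (hk : 3 ≤ k') (hn : k' ≤ nr)
    (r : ℝ) (hr0 : 0 < r) (hr1 : r < 1)
    (Q : ℕ → ℝ)
    (hQ : ∀ i, 1 ≤ i → i ≤ k' →
      Q i = (Nat.choose (nr - 1) (k' - i) : ℝ) * (1 - r) ^ (k' - i) * r ^ (nr - k' + i - 1))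
    (hQ0 : ∀ i, k' < i → Q i = 0) :
    0 < Q 2 ^ 2 - (∑ i ∈ Finset.Icc 3 k', Q i) * (Q 1 - Q 2) := by
  have h1r : (0:ℝ) < 1 - r := by linarith
  have hQ2pos : 0 < Q 2 := by
    rw [hQ 2 (by omega) (by omega)]
    have : 0 < ((nr-1).choose (k'-2) : ℝ) := by
      exact_mod_cast Nat.choose_pos (by omega)
    positivity
  have hQnn : ∀ i, 1 ≤ i → i ≤ k' → 0 ≤ Q i := by
    intro i ha hb
    rw [hQ i ha hb]
    positivity
  have hSnn : 0 ≤ ∑ i ∈ Finset.Icc 3 k', Q i := by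
    apply Finset.sum_nonneg
    intro i hi
    rw [Finset.mem_Icc] at hi
    exact hQnn i (by omega) hi.2
  by_cases hcase : Q 1 ≤ Q 2
  · nlinarith [mul_nonpos_of_nonneg_of_nonpos hSnn (by linarith : Q 1 - Q 2 ≤ 0)]
  push_neg at hcase
  have hQ1pos : 0 < Q 1 := lt_trans hQ2pos hcase
  set α : ℝ := Q 2 / Q 1 with hαdef
  have hα0 : 0 < α := div_pos hQ2pos hQ1pos
  have hα1 : α < 1 := (div_lt_one hQ1pos).2 hcase
  have hαQ1 : α * Q 1 = Q 2 := div_mul_cancel₀ _ (ne_of_gt hQ1pos)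
  -- key ratio step
  have hkey : ∀ i, 1 ≤ i → i + 1 ≤ k' → Q (i+1) ≤ α * Q i := by
    intro i ha hb
    have h := key_step nr k' hk hn r hr0 hr1 i ha hb
    rw [← hQ (i+1) (by omega) hb, ← hQ i ha (by omega),
        ← hQ 1 (by omega) (by omega), ← hQ 2 (by omega) (by omega)] at h
    rw [hαdef, div_mul_eq_mul_div, le_div_iff₀ hQ1pos]
    linarith [h]
  -- geometric bound
  have hbound : ∀ i, 2 ≤ i → i ≤ k' → Q i ≤ Q 2 * α ^ (i - 2) := by
    intro i hi
    induction i, hi using Nat.le_induction with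
    | base => intro _; simp
    | succ i hi IH =>
      intro hik
      have hQi := IH (by omega)
      calc Q (i+1) ≤ α * Q i := hkey i (by omega) hik
        _ ≤ α * (Q 2 * α ^ (i-2)) := by
            apply mul_le_mul_of_nonneg_left hQi (le_of_lt hα0)
        _ = Q 2 * α ^ (i+1-2) := by
            rw [show i+1-2 = (i-2)+1 by omega, pow_succ]; ring
  -- bound the sum
  set N := k' + 1 - 3 with hNdef
  have hsum : (∑ i ∈ Finset.Icc 3 k', Q i) ≤ Q 2 * α * ∑ j ∈ Finset.range N, α ^ j := by
    calc (∑ i ∈ Finset.Icc 3 k', Q i)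
        ≤ ∑ i ∈ Finset.Icc 3 k', Q 2 * α ^ (i-2) := by
          apply Finset.sum_le_sum
          intro i hi
          rw [Finset.mem_Icc] at hi
          exact hbound i (by omega) hi.2
      _ = ∑ j ∈ Finset.range N, Q 2 * α ^ (3+j-2) := by
          rw [← Finset.Ico_add_one_right_eq_Icc, Finset.sum_Ico_eq_sum_range]
      _ = Q 2 * α * ∑ j ∈ Finset.range N, α ^ j := by
          rw [Finset.mul_sum]
          apply Finset.sum_congr rfl
          intro j _
          have : 3+j-2 = j+1 := by omega
          rw [this, pow_succ]
          ring
  have hgeom : (∑ j ∈ Finset.range N, α ^ j) * (α - 1) = α ^ N - 1 := geom_sum_mul α N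
  have hαN : 0 < α ^ N := pow_pos hα0 N
  set G := ∑ j ∈ Finset.range N, α ^ j with hGdef
  have hGnn : 0 ≤ G := Finset.sum_nonneg fun j _ => pow_nonneg (le_of_lt hα0) j
  have hmul : (∑ i ∈ Finset.Icc 3 k', Q i) * (Q 1 - Q 2) ≤ Q 2 * α * G * (Q 1 - Q 2) :=
    mul_le_mul_of_nonneg_right hsum (by linarith)
  have hcalc : Q 2 * α * G * (Q 1 - Q 2) = Q 2 * Q 2 * (1 - α ^ N) := by
    calc Q 2 * α * G * (Q 1 - Q 2) = Q 2 * G * (α * Q 1 - α * Q 2) := by ring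
      _ = Q 2 * G * (Q 2 - α * Q 2) := by rw [hαQ1]
      _ = Q 2 * Q 2 * (-(G * (α - 1))) := by ring
      _ = Q 2 * Q 2 * (1 - α ^ N) := by rw [hgeom]; ring
  nlinarith [hmul, hcalc, hαN, hQ2pos, mul_pos hQ2pos hQ2pos]
end

section
/- Fix a positive integer k and reals Q_1 > 0, Q_2 > 0, Q_{>=3} >= 0 with Q_1 < Q_2, and a target value phi with Q_{>=3} < phi. Consider maximizing (Q_2 + Q_{>=3})(r_1 + r_2) + Q_1 r_1 r_2 over (r_1, r_2) in [0,1]^2 subject to r_1 r_2 (Q_1 - Q_2) + (r_1 + r_2) Q_2 = phi - Q_{>=3}. If the feasible set is nonempty, then any maximizer satisfies r_1 = r_2. -/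
/-- Case II(a) of the Min-Revenue program: fix `Q₁, Q₂ > 0` with `Q₁ < Q₂`, `Q₃ ≥ 0`, and a
target `φ > Q₃`. Consider maximizing `(Q₂ + Q₃)(r₁ + r₂) + Q₁ r₁ r₂` over
`(r₁, r₂) ∈ [0,1]²` subject to `r₁ r₂ (Q₁ - Q₂) + (r₁ + r₂) Q₂ = φ - Q₃`.
Any maximizer satisfies `r₁ = r₂`. -/
theorem stmt_15 (k : ℕ) (hk : 0 < k)
    (Q₁ Q₂ Q₃ φ : ℝ) (hQ₁ : 0 < Q₁) (hQ₂ : 0 < Q₂) (hQ₃ : 0 ≤ Q₃)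
    (hlt : Q₁ < Q₂) (hφ : Q₃ < φ) :
    ∀ r : ℝ × ℝ,
      (r.1 ∈ Set.Icc (0:ℝ) 1 ∧ r.2 ∈ Set.Icc (0:ℝ) 1 ∧
        r.1 * r.2 * (Q₁ - Q₂) + (r.1 + r.2) * Q₂ = φ - Q₃) →
      (∀ s : ℝ × ℝ,
        (s.1 ∈ Set.Icc (0:ℝ) 1 ∧ s.2 ∈ Set.Icc (0:ℝ) 1 ∧
          s.1 * s.2 * (Q₁ - Q₂) + (s.1 + s.2) * Q₂ = φ - Q₃) →
        (Q₂ + Q₃) * (s.1 + s.2) + Q₁ * (s.1 * s.2)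
          ≤ (Q₂ + Q₃) * (r.1 + r.2) + Q₁ * (r.1 * r.2)) →
      r.1 = r.2 := by
  rintro r ⟨⟨hr10, hr11⟩, ⟨hr20, hr21⟩, hrc⟩ hmax
  by_contra hne
  have hsqne : 0 < (r.1 - r.2) ^ 2 := by
    have := sub_ne_zero.mpr hne
    positivity
  have ha : 0 < Q₂ - Q₁ := by linarith
  have hc : 0 < φ - Q₃ := by linarith
  -- c ≤ Q₁ + Q₂
  have hcle : φ - Q₃ ≤ Q₁ + Q₂ := by nlinarith [mul_nonneg (sub_nonneg.mpr hr11) (sub_nonneg.mpr hr21), mul_nonneg hr10 hr20]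
  obtain ⟨D, hD_def⟩ : ∃ D : ℝ, D = Q₂ ^ 2 - (Q₂ - Q₁) * (φ - Q₃) := ⟨_, rfl⟩
  have hD1 : Q₁ ^ 2 ≤ D := by rw [hD_def]; nlinarith
  have hD0 : 0 ≤ D := by nlinarith
  have hsq : Real.sqrt D ^ 2 = D := Real.sq_sqrt hD0
  have hsl : Q₁ ≤ Real.sqrt D := by
    rw [show Q₁ = Real.sqrt (Q₁ ^ 2) from (Real.sqrt_sq hQ₁.le).symm]
    exact Real.sqrt_le_sqrt hD1
  have hsu : Real.sqrt D ≤ Q₂ := by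
    rw [show Q₂ = Real.sqrt (Q₂ ^ 2) from (Real.sqrt_sq hQ₂.le).symm]
    apply Real.sqrt_le_sqrt
    rw [hD_def]; nlinarith
  obtain ⟨t, ht_def⟩ : ∃ t : ℝ, t = (Q₂ - Real.sqrt D) / (Q₂ - Q₁) := ⟨_, rfl⟩
  have ht0 : 0 ≤ t := by rw [ht_def]; exact div_nonneg (by linarith) ha.le
  have ht1 : t ≤ 1 := by rw [ht_def, div_le_one ha]; linarith
  have hat : (Q₂ - Q₁) * t = Q₂ - Real.sqrt D := by
    rw [ht_def]; field_simp
  have htc : t * t * (Q₁ - Q₂) + (t + t) * Q₂ = φ - Q₃ := by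
    have h2 : ((Q₂ - Q₁) * t) ^ 2 = (Q₂ - Real.sqrt D) ^ 2 := by rw [hat]
    nlinarith [h2, hsq]
  have hobj := hmax (t, t) ⟨⟨ht0, ht1⟩, ⟨ht0, ht1⟩, htc⟩
  simp only at hobj
  -- linear relation between products from the two constraints
  have h1 : (Q₂ - Q₁) * (t * t - r.1 * r.2) = Q₂ * (2 * t - (r.1 + r.2)) := by
    linear_combination hrc - htc
  have hCpos : 0 < (Q₂ + Q₃) * (Q₂ - Q₁) + Q₁ * Q₂ := by
    have h := mul_pos (show (0:ℝ) < Q₂ + Q₃ by linarith) ha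
    have h' := mul_pos hQ₁ hQ₂
    linarith
  have hC : ((Q₂ + Q₃) * (Q₂ - Q₁) + Q₁ * Q₂) * (2 * t - (r.1 + r.2))
      = (Q₂ - Q₁) * (((Q₂ + Q₃) * (t + t) + Q₁ * (t * t))
        - ((Q₂ + Q₃) * (r.1 + r.2) + Q₁ * (r.1 * r.2))) := by
    linear_combination (-Q₁) * h1
  have h2 : 2 * t - (r.1 + r.2) ≤ 0 := by
    by_contra h
    push_neg at h
    have := mul_pos hCpos h
    rw [hC] at this
    have hAB : ((Q₂ + Q₃) * (t + t) + Q₁ * (t * t))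
        - ((Q₂ + Q₃) * (r.1 + r.2) + Q₁ * (r.1 * r.2)) ≤ 0 := by linarith
    exact absurd this (not_lt.mpr (mul_nonpos_of_nonneg_of_nonpos ha.le hAB))
  obtain ⟨m, hm_def⟩ : ∃ m : ℝ, m = (r.1 + r.2) / 2 := ⟨_, rfl⟩
  have hfact : (t - m) * (2 * Q₂ - (Q₂ - Q₁) * (t + m)) = (Q₂ - Q₁) * (m ^ 2 - r.1 * r.2) := by
    rw [hm_def]; linear_combination htc - hrc
  have hm2 : r.1 * r.2 < m ^ 2 := by
    have hid : ((r.1 + r.2) / 2) ^ 2 - r.1 * r.2 = (r.1 - r.2) ^ 2 / 4 := by ring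
    rw [hm_def]; linarith
  have hm0 : 0 ≤ m := by rw [hm_def]; linarith
  have hmle : m ≤ 1 := by rw [hm_def]; linarith
  have hpos : 0 < 2 * Q₂ - (Q₂ - Q₁) * (t + m) := by
    have h := mul_le_mul_of_nonneg_left (show t + m ≤ 2 by linarith) ha.le
    linarith
  have htm : t - m ≤ 0 := by rw [hm_def]; linarith
  have hL : (t - m) * (2 * Q₂ - (Q₂ - Q₁) * (t + m)) ≤ 0 :=
    mul_nonpos_of_nonpos_of_nonneg htm hpos.le
  have hR : 0 < (Q₂ - Q₁) * (m ^ 2 - r.1 * r.2) := mul_pos ha (by linarith)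
  linarith [hfact]
end

section
/- Let v_1,...,v_n be independent nonnegative random variables, p >= 0, k a positive integer, and X_p = |{t : v_t >= p}|. Let Welfare(p) be the expected total value of purchasers in the sequential posted-price process with k units (any fixed arrival order). Then Welfare(p) >= min(E[min(X_p,k)]/k, P[X_p <= k-1]) * E[max_{|S|<=k} sum_{t in S} v_t]. -/
open MeasureTheory ProbabilityTheory Finset

/-- Welfare-to-optimum lower bound for any static price (Lemma 3.1).
Buyers `t : Fin n` with independent nonnegative values `v t` arrive in order; in the
sequential posted-price process with `k` units at price `p ≥ 0`, buyer `t` purchases iff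
`v t ≥ p` and fewer than `k` units have been sold so far. With `X_p` the number of buyers
whose value is at least `p`, the expected welfare is at least
`min(E[min(X_p,k)]/k, P[X_p ≤ k-1])` times the expected sum of the `k` largest values. -/
theorem stmt_18 {Ω : Type*} [MeasurableSpace Ω] (μ : Measure Ω) [IsProbabilityMeasure μ]
    (n k : ℕ) (hk : 0 < k)
    (v : Fin n → Ω → ℝ) (hmeas : ∀ t, Measurable (v t))
    (hint : ∀ t, Integrable (v t) μ)
    (hnn : ∀ t ω, 0 ≤ v t ω)
    (hindep : iIndepFun v μ)
    (p : ℝ) (hp : 0 ≤ p)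
    (purchases : Ω → Finset (Fin n))
    (hpmeas : ∀ t : Fin n, MeasurableSet {ω | t ∈ purchases ω})
    (hchar : ∀ ω t, t ∈ purchases ω ↔
      (p ≤ v t ω ∧ ((purchases ω).filter (fun s => s < t)).card ≤ k - 1)) :
    min ((∫ ω, (↑(min ((univ : Finset (Fin n)).filter (fun t => p ≤ v t ω)).card k) : ℝ) ∂μ)
          / k)
        ((μ {ω | ((univ : Finset (Fin n)).filter (fun t => p ≤ v t ω)).card ≤ k - 1}).toReal)
      * (∫ ω, (⨆ S : {S : Finset (Fin n) // S.card ≤ k}, ∑ t ∈ S.1, v t ω) ∂μ)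
    ≤ ∫ ω, ∑ t ∈ purchases ω, v t ω ∂μ := by
  classical
  -- abbreviations
  set A : ℝ := ∫ ω, (↑(min ((univ : Finset (Fin n)).filter (fun t => p ≤ v t ω)).card k) : ℝ) ∂μ
    with hAdef
  set q : ℝ :=
    (μ {ω | ((univ : Finset (Fin n)).filter (fun t => p ≤ v t ω)).card ≤ k - 1}).toReal with hqdef
  -- positive parts
  set w : Fin n → Ω → ℝ := fun t ω => max (v t ω - p) 0 with hwdef
  have hw_meas : ∀ t, Measurable (w t) :=
    fun t => ((hmeas t).sub measurable_const).max measurable_const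
  have hw_int : ∀ t, Integrable (w t) μ :=
    fun t => ((hint t).sub (integrable_const p)).pos_part
  have hw_nn : ∀ t ω, 0 ≤ w t ω := fun t ω => le_max_right _ _
  -- the events A_t
  set Aset : Fin n → Set Ω := fun t =>
    {ω | (((univ : Finset (Fin n)).filter (fun s => s < t)).filter
      (fun s => p ≤ v s ω)).card ≤ k - 1} with hAsetdef
  have hcard_meas : ∀ (s : Finset (Fin n)),
      Measurable (fun ω => (s.filter (fun i => p ≤ v i ω)).card) := by
    intro s
    simp_rw [Finset.card_filter]
    exact Finset.measurable_sum _ fun i _ =>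
      Measurable.ite (measurableSet_le measurable_const (hmeas i)) measurable_const
        measurable_const
  have hAmeas : ∀ t, MeasurableSet (Aset t) := fun t => (hcard_meas _) measurableSet_Iic
  -- the functions g
  set g : Fin n → Ω → ℝ := fun t ω => (if ω ∈ Aset t then (1:ℝ) else 0) * w t ω with hgdef
  have hg_ind : ∀ t, (fun ω => if ω ∈ Aset t then (1:ℝ) else 0)
      = (Aset t).indicator (fun _ => (1:ℝ)) := by
    intro t; funext ω; simp [Set.indicator_apply]
  have hg_eq : ∀ t, g t = (Aset t).indicator (w t) := by
    intro t; funext ω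
    by_cases hA : ω ∈ Aset t <;> simp [hgdef, Set.indicator_apply, hA]
  have hg_int : ∀ t, Integrable (g t) μ := by
    intro t; rw [hg_eq t]; exact (hw_int t).indicator (hAmeas t)
  -- independence of A_t and w t
  have hIndep : ∀ t : Fin n,
      IndepFun (fun ω => if ω ∈ Aset t then (1:ℝ) else 0) (w t) μ := by
    intro t
    set S : Finset (Fin n) := univ.filter (fun s => s < t) with hSdef
    have hdisj : Disjoint S ({t} : Finset (Fin n)) := by
      simp only [Finset.disjoint_singleton_right, hSdef, Finset.mem_filter]
      exact fun h => lt_irrefl t h.2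
    have base := hindep.indepFun_finset S {t} hdisj hmeas
    set φL : ({x // x ∈ S} → ℝ) → ℝ := fun x =>
      if ((univ : Finset {x // x ∈ S}).filter (fun s => p ≤ x s)).card ≤ k - 1 then 1 else 0
      with hφLdef
    set φR : ({x // x ∈ ({t} : Finset (Fin n))} → ℝ) → ℝ := fun x =>
      max (x ⟨t, Finset.mem_singleton_self t⟩ - p) 0 with hφRdef
    have hφL : Measurable φL := by
      have hc : Measurable (fun x : ({x // x ∈ S} → ℝ) =>
          ((univ : Finset {x // x ∈ S}).filter (fun s => p ≤ x s)).card) := by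
        simp_rw [Finset.card_filter]
        exact Finset.measurable_sum _ fun i _ =>
          Measurable.ite (measurableSet_le measurable_const (measurable_pi_apply i))
            measurable_const measurable_const
      exact Measurable.ite (hc measurableSet_Iic) measurable_const measurable_const
    have hφR : Measurable φR :=
      ((measurable_pi_apply _).sub measurable_const).max measurable_const
    have hcomp := base.comp hφL hφR
    have hcards : ∀ ω,
        ((univ : Finset {x // x ∈ S}).filter (fun s => p ≤ v s.1 ω)).card
          = (S.filter (fun s => p ≤ v s ω)).card := by
      intro ω
      rw [Finset.univ_eq_attach, Finset.card_filter, Finset.card_filter]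
      exact Finset.sum_attach S (fun s => if p ≤ v s ω then 1 else 0)
    have h1 : (fun ω => if ω ∈ Aset t then (1:ℝ) else 0)
        = φL ∘ (fun ω (i : {x // x ∈ S}) => v i ω) := by
      funext ω
      simp only [Function.comp, hφLdef, hAsetdef, Set.mem_setOf_eq, hcards ω, hSdef]
    have h2 : w t = φR ∘ (fun ω (i : {x // x ∈ ({t} : Finset (Fin n))}) => v i ω) := by
      funext ω; rfl
    rw [h1, h2]
    exact hcomp
  -- integral of g
  have hind_int : ∀ t, Integrable (fun ω => if ω ∈ Aset t then (1:ℝ) else 0) μ := by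
    intro t; rw [hg_ind t]; exact (integrable_const 1).indicator (hAmeas t)
  have hg_integral : ∀ t, ∫ ω, g t ω ∂μ = (μ (Aset t)).toReal * ∫ ω, w t ω ∂μ := by
    intro t
    have hmul := (hIndep t).integral_mul_eq_mul_integral (hind_int t).aestronglyMeasurable
      (hw_int t).aestronglyMeasurable
    have h0 : ∫ ω, (fun ω => if ω ∈ Aset t then (1:ℝ) else 0) ω ∂μ = (μ (Aset t)).toReal := by
      rw [hg_ind t, MeasureTheory.integral_indicator_const (1:ℝ) (hAmeas t), smul_eq_mul,
        mul_one, Measure.real]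
    calc ∫ ω, g t ω ∂μ
        = ∫ ω, ((fun ω => if ω ∈ Aset t then (1:ℝ) else 0) * (w t)) ω ∂μ := rfl
      _ = (∫ ω, (fun ω => if ω ∈ Aset t then (1:ℝ) else 0) ω ∂μ) * ∫ ω, w t ω ∂μ := hmul
      _ = (μ (Aset t)).toReal * ∫ ω, w t ω ∂μ := by rw [h0]
  -- pointwise lower bound for welfare
  have hpoint : ∀ ω,
      p * (↑(min ((univ : Finset (Fin n)).filter (fun t => p ≤ v t ω)).card k) : ℝ)
        + ∑ t : Fin n, g t ω ≤ ∑ t ∈ purchases ω, v t ω := by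
    intro ω
    have hcardP : min ((univ : Finset (Fin n)).filter (fun t => p ≤ v t ω)).card k
        ≤ (purchases ω).card := by
      by_cases h : (purchases ω).card ≤ k - 1
      · have hFP : (univ : Finset (Fin n)).filter (fun t => p ≤ v t ω) ⊆ purchases ω := by
          intro t ht
          exact (hchar ω t).2 ⟨(Finset.mem_filter.1 ht).2,
            le_trans (Finset.card_le_card (Finset.filter_subset _ _)) h⟩
        exact le_trans (min_le_left _ _) (Finset.card_le_card hFP)
      · exact le_trans (min_le_right _ _) (by omega)
    have hterm : ∀ t, g t ω ≤ (if t ∈ purchases ω then v t ω - p else 0) := by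
      intro t
      have hRHSnn : 0 ≤ (if t ∈ purchases ω then v t ω - p else 0) := by
        split_ifs with h
        · exact sub_nonneg.2 ((hchar ω t).1 h).1
        · exact le_rfl
      by_cases hA : ω ∈ Aset t
      · by_cases hv : p ≤ v t ω
        · have hsub2 : (purchases ω).filter (fun s => s < t)
              ⊆ ((univ : Finset (Fin n)).filter (fun s => s < t)).filter
                (fun s => p ≤ v s ω) := by
            intro s hs
            rcases Finset.mem_filter.1 hs with ⟨hsP, hst⟩
            exact Finset.mem_filter.2 ⟨Finset.mem_filter.2 ⟨Finset.mem_univ s, hst⟩,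
              ((hchar ω s).1 hsP).1⟩
          have htP : t ∈ purchases ω :=
            (hchar ω t).2 ⟨hv, le_trans (Finset.card_le_card hsub2) hA⟩
          simp [hgdef, hA, htP, hwdef, max_eq_left (sub_nonneg.2 hv)]
        · have hw0 : w t ω = 0 := max_eq_right (by simp [hwdef]; linarith)
          calc g t ω = 0 := by rw [hgdef]; simp [hw0]
            _ ≤ _ := hRHSnn
      · calc g t ω = 0 := by simp [hgdef, hA]
          _ ≤ _ := hRHSnn
    calc p * (↑(min ((univ : Finset (Fin n)).filter (fun t => p ≤ v t ω)).card k) : ℝ)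
          + ∑ t : Fin n, g t ω
        ≤ p * ((purchases ω).card : ℝ)
            + ∑ t : Fin n, (if t ∈ purchases ω then v t ω - p else 0) :=
          add_le_add (mul_le_mul_of_nonneg_left (by exact_mod_cast hcardP) hp)
            (Finset.sum_le_sum fun t _ => hterm t)
      _ = ∑ t ∈ purchases ω, v t ω := by
          rw [Finset.sum_ite_mem, Finset.univ_inter, Finset.sum_sub_distrib,
            Finset.sum_const, nsmul_eq_mul]
          ring
  -- integrability
  have hmin_meas : Measurable (fun ω =>
      (↑(min ((univ : Finset (Fin n)).filter (fun t => p ≤ v t ω)).card k) : ℝ)) := by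
    have h1 : Measurable (fun m : ℕ => ((min m k : ℕ) : ℝ)) := measurable_from_top
    exact h1.comp (hcard_meas univ)
  have hmin_int : Integrable (fun ω =>
      (↑(min ((univ : Finset (Fin n)).filter (fun t => p ≤ v t ω)).card k) : ℝ)) μ := by
    refine Integrable.mono' (integrable_const (k:ℝ)) hmin_meas.aestronglyMeasurable
      (ae_of_all _ fun ω => ?_)
    rw [Real.norm_eq_abs, abs_of_nonneg (by positivity)]
    exact_mod_cast min_le_right _ k
  have hWrw : (fun ω => ∑ t ∈ purchases ω, v t ω)
      = (fun ω => ∑ t : Fin n, Set.indicator {ω' | t ∈ purchases ω'} (v t) ω) := by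
    funext ω
    simp only [Set.indicator_apply, Set.mem_setOf_eq]
    rw [Finset.sum_ite_mem, Finset.univ_inter]
  have hW_int : Integrable (fun ω => ∑ t ∈ purchases ω, v t ω) μ := by
    rw [hWrw]
    exact integrable_finset_sum _ fun t _ => (hint t).indicator (hpmeas t)
  have hgsum_int : Integrable (fun ω => ∑ t : Fin n, g t ω) μ :=
    integrable_finset_sum _ fun t _ => hg_int t
  have hL_int : Integrable (fun ω =>
      p * (↑(min ((univ : Finset (Fin n)).filter (fun t => p ≤ v t ω)).card k) : ℝ)
        + ∑ t : Fin n, g t ω) μ := (hmin_int.const_mul p).add hgsum_int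
  -- step 1 : lower bound for welfare integral
  have hstep1 : p * A + ∑ t : Fin n, (μ (Aset t)).toReal * ∫ ω, w t ω ∂μ
      ≤ ∫ ω, ∑ t ∈ purchases ω, v t ω ∂μ := by
    have hmono := integral_mono hL_int hW_int hpoint
    rw [integral_add (hmin_int.const_mul p) hgsum_int, integral_const_mul p,
      integral_finset_sum _ (fun t _ => hg_int t)] at hmono
    calc p * A + ∑ t : Fin n, (μ (Aset t)).toReal * ∫ ω, w t ω ∂μ
        = p * A + ∑ t : Fin n, ∫ ω, g t ω ∂μ := by
          congr 1
          exact (Finset.sum_congr rfl fun t _ => (hg_integral t)).symm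
      _ ≤ _ := hmono
  -- OPT bound
  have hne : Nonempty {S : Finset (Fin n) // S.card ≤ k} := ⟨⟨∅, by simp⟩⟩
  have hOPT_le : ∀ ω, (⨆ S : {S : Finset (Fin n) // S.card ≤ k}, ∑ t ∈ S.1, v t ω)
      ≤ p * k + ∑ t : Fin n, w t ω := by
    intro ω
    refine ciSup_le fun S => ?_
    calc ∑ t ∈ S.1, v t ω
        ≤ ∑ t ∈ S.1, (p + w t ω) := by
          refine Finset.sum_le_sum fun t _ => ?_
          have := le_max_left (v t ω - p) 0
          simp only [hwdef]; linarith
      _ = p * S.1.card + ∑ t ∈ S.1, w t ω := by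
          rw [Finset.sum_add_distrib, Finset.sum_const, nsmul_eq_mul]; ring
      _ ≤ p * k + ∑ t : Fin n, w t ω := by
          refine add_le_add (mul_le_mul_of_nonneg_left (by exact_mod_cast S.2) hp) ?_
          exact Finset.sum_le_sum_of_subset_of_nonneg (Finset.subset_univ _)
            (fun t _ _ => hw_nn t ω)
  have hOPT_nn : ∀ ω, 0 ≤ (⨆ S : {S : Finset (Fin n) // S.card ≤ k}, ∑ t ∈ S.1, v t ω) := by
    intro ω
    have hbdd : BddAbove (Set.range fun S : {S : Finset (Fin n) // S.card ≤ k} =>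
        ∑ t ∈ S.1, v t ω) := Set.Finite.bddAbove (Set.finite_range _)
    have := le_ciSup hbdd (⟨∅, by simp⟩ : {S : Finset (Fin n) // S.card ≤ k})
    simpa using this
  have hOPT_meas : Measurable (fun ω =>
      ⨆ S : {S : Finset (Fin n) // S.card ≤ k}, ∑ t ∈ S.1, v t ω) :=
    Measurable.iSup fun S => Finset.measurable_sum _ fun t _ => hmeas t
  have hB_int : Integrable (fun ω => p * k + ∑ t : Fin n, w t ω) μ :=
    (integrable_const _).add (integrable_finset_sum _ fun t _ => hw_int t)
  have hOPT_int : Integrable (fun ω =>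
      ⨆ S : {S : Finset (Fin n) // S.card ≤ k}, ∑ t ∈ S.1, v t ω) μ := by
    refine Integrable.mono' hB_int hOPT_meas.aestronglyMeasurable (ae_of_all _ fun ω => ?_)
    rw [Real.norm_eq_abs, abs_of_nonneg (hOPT_nn ω)]
    exact hOPT_le ω
  have hOPT_integral :
      (∫ ω, (⨆ S : {S : Finset (Fin n) // S.card ≤ k}, ∑ t ∈ S.1, v t ω) ∂μ)
        ≤ p * k + ∑ t : Fin n, ∫ ω, w t ω ∂μ := by
    have := integral_mono hOPT_int hB_int hOPT_le
    rwa [integral_add (integrable_const _) (integrable_finset_sum _ fun t _ => hw_int t),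
      integral_const, integral_finset_sum _ (fun t _ => hw_int t), probReal_univ,
      one_smul] at this
  -- final arithmetic
  have hA_nn : 0 ≤ A := by
    rw [hAdef]
    exact integral_nonneg fun ω => by positivity
  have hwint_nn : ∀ t : Fin n, 0 ≤ ∫ ω, w t ω ∂μ :=
    fun t => integral_nonneg fun ω => hw_nn t ω
  have hT_nn : 0 ≤ ∑ t : Fin n, ∫ ω, w t ω ∂μ := Finset.sum_nonneg fun t _ => hwint_nn t
  have hq_le : ∀ t : Fin n, q ≤ (μ (Aset t)).toReal := by
    intro t
    refine ENNReal.toReal_mono (measure_ne_top μ _) (measure_mono ?_)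
    intro ω hω
    simp only [Set.mem_setOf_eq, hAsetdef] at hω ⊢
    refine le_trans (Finset.card_le_card ?_) hω
    intro s hs
    exact Finset.mem_filter.2 ⟨Finset.mem_univ s, (Finset.mem_filter.1 hs).2⟩
  have hq_nn : 0 ≤ q := ENNReal.toReal_nonneg
  have hc_nn : 0 ≤ min (A / k) q :=
    le_min (div_nonneg hA_nn (Nat.cast_nonneg k)) hq_nn
  have hk' : (k:ℝ) ≠ 0 := Nat.cast_ne_zero.2 hk.ne'
  calc min (A / k) q * (∫ ω, (⨆ S : {S : Finset (Fin n) // S.card ≤ k}, ∑ t ∈ S.1, v t ω) ∂μ)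
      ≤ min (A / k) q * (p * k + ∑ t : Fin n, ∫ ω, w t ω ∂μ) :=
        mul_le_mul_of_nonneg_left hOPT_integral hc_nn
    _ = min (A / k) q * (p * k) + min (A / k) q * (∑ t : Fin n, ∫ ω, w t ω ∂μ) := mul_add _ _ _
    _ ≤ (A / k) * (p * k) + q * (∑ t : Fin n, ∫ ω, w t ω ∂μ) :=
        add_le_add (mul_le_mul_of_nonneg_right (min_le_left _ _) (by positivity))
          (mul_le_mul_of_nonneg_right (min_le_right _ _) hT_nn)
    _ = p * A + ∑ t : Fin n, q * ∫ ω, w t ω ∂μ := by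
        rw [Finset.mul_sum]
        congr 1
        field_simp
    _ ≤ p * A + ∑ t : Fin n, (μ (Aset t)).toReal * ∫ ω, w t ω ∂μ := by
        refine add_le_add_right (Finset.sum_le_sum fun t _ => ?_) _
        exact mul_le_mul_of_nonneg_right (hq_le t) (hwint_nn t)
    _ ≤ ∫ ω, ∑ t ∈ purchases ω, v t ω ∂μ := hstep1
end

section
/- For every positive integer k, the solution lambda_k of the equation (1/k) E[min(Poisson(lambda),k)] = P[Poisson(lambda) <= k-1] yields a common value phi_k = P[Poisson(lambda_k) <= k-1] satisfying phi_k >= 1/2. -/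
/-- For every positive integer `k`, the solution `λ_k > 0` of the balance equation
`(1/k) E[min(Poisson(λ),k)] = P[Poisson(λ) ≤ k-1]` yields a common value
`φ_k = P[Poisson(λ_k) ≤ k-1]` that is at least `1/2`. -/
theorem stmt_19 (k : ℕ) (hk : 0 < k) (l : ℝ) (hl : 0 < l)
    (hbal : muPoisson k l = deltaPoisson k l) :
    1 / 2 ≤ deltaPoisson k l := by
  set p := poissonPMF l with hp
  have hpdef : ∀ j, p j = Real.exp (-l) * (l ^ j / j.factorial) := by
    intro j; simp [hp, poissonPMF]; ring
  have hp_nonneg : ∀ j, 0 ≤ p j := by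
    intro j; rw [hpdef]; positivity
  have hp_sum : Summable p := by
    simp only [funext hpdef]
    exact (Real.summable_pow_div_factorial l).mul_left _
  have hp_tsum : ∑' j, p j = 1 := by
    simp only [funext hpdef]
    rw [tsum_mul_left]
    have : ∑' j : ℕ, l ^ j / (j.factorial : ℝ) = Real.exp l := by
      rw [Real.exp_eq_exp_ℝ, NormedSpace.exp_eq_tsum_div]
    rw [this, ← Real.exp_add]
    simp
  set g : ℕ → ℝ := fun j => ((k : ℝ) - ↑(min j k)) * p j with hg
  have hg_zero : ∀ j ∉ Finset.range k, g j = 0 := by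
    intro j hj
    simp only [Finset.mem_range, not_lt] at hj
    simp only [hg, min_eq_right hj, sub_self, zero_mul]
  have hg_sum : Summable g := summable_of_ne_finset_zero hg_zero
  have hsplit : ∀ j, (↑(min j k) : ℝ) * p j = (k : ℝ) * p j - g j := by
    intro j; simp only [hg]; ring
  set S : ℝ := ∑ j ∈ Finset.range k, g j with hS
  have htsum_g : ∑' j, g j = S := tsum_eq_sum hg_zero
  have hmin_tsum : ∑' j : ℕ, (↑(min j k) : ℝ) * p j = (k : ℝ) - S := by
    calc ∑' j : ℕ, (↑(min j k) : ℝ) * p j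
        = ∑' j : ℕ, ((k : ℝ) * p j - g j) := tsum_congr hsplit
      _ = (∑' j : ℕ, (k : ℝ) * p j) - ∑' j, g j :=
          Summable.tsum_sub (hp_sum.mul_left _) hg_sum
      _ = (k : ℝ) * 1 - S := by rw [tsum_mul_left, hp_tsum, htsum_g]
      _ = (k : ℝ) - S := by ring
  have hSle : S ≤ (k : ℝ) * deltaPoisson k l := by
    rw [hS, deltaPoisson, Finset.mul_sum]
    apply Finset.sum_le_sum
    intro j hj
    simp only [hg]
    apply mul_le_mul_of_nonneg_right _ (hp_nonneg j)
    have : (0 : ℝ) ≤ ↑(min j k) := Nat.cast_nonneg _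
    linarith
  have hkpos : (0 : ℝ) < k := Nat.cast_pos.mpr hk
  have hmu : muPoisson k l = 1 - S / k := by
    rw [muPoisson, ← hp, hmin_tsum]
    field_simp
  rw [hmu] at hbal
  have : (k : ℝ) - S = k * deltaPoisson k l := by
    field_simp at hbal
    linarith
  nlinarith
end
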